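/- arXiv:1607.06661 — 2 statements merged into one kernel-verified Lean document; each statement's English description precedes it below -/
import Mathlib

section
/- (Theorem 1, second covariance relation.) Let D ⊆ ℂ be open, let B, Ψ⁺, F, F⁺, ω_{F,F⁺}, ω_{F,Ψ⁺} : D → Matrix (Fin N) (Fin N) ℂ be real-differentiable, and assume on D: (i) ∂_z̄ F + B·conj(F) = 0; (ii) ∂_z F⁺ − conj(F⁺)·B = 0 and ∂_z Ψ⁺ − conj(Ψ⁺)·B = 0; (iii) ∂_z̄ ω_{F,F⁺} = F⁺·conj(F), ∂_z ω_{F,F⁺} = − conj(F⁺)·F, and conj(ω_{F,F⁺}) = − ω_{F,F⁺}; (iv) ∂_z̄ ω_{F,Ψ⁺} = Ψ⁺·conj(F), ∂_z ω_{F,Ψ⁺} = − conj(Ψ⁺)·F, and conj(ω_{F,Ψ⁺}) = − ω_{F,Ψ⁺}; (v) ω_{F,F⁺}(z) is invertible for every z ∈ D. Define Ψ̃⁺ = Ψ⁺ − ω_{F,Ψ⁺} · ω_{F,F⁺}⁻¹ · F⁺ and B̃ = B + F · ω_{F,F⁺}⁻¹ · F⁺. Then ∂_z Ψ̃⁺ −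 conj(Ψ̃⁺) · B̃ = 0 on D. -/
open Complex Matrix

/-- Entrywise Wirtinger derivative ∂_z f = (1/2)(∂f/∂x − i ∂f/∂y). -/
noncomputable def wDz {N : ℕ} (f : ℂ → Matrix (Fin N) (Fin N) ℂ) (z : ℂ) :
    Matrix (Fin N) (Fin N) ℂ :=
  Matrix.of fun i j =>
    (1 / 2 : ℂ) * (fderiv ℝ (fun w => f w i j) z 1
      - Complex.I * fderiv ℝ (fun w => f w i j) z Complex.I)

/-- Entrywise Wirtinger derivative ∂_z̄ f = (1/2)(∂f/∂x + i ∂f/∂y). -/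
noncomputable def wDzbar {N : ℕ} (f : ℂ → Matrix (Fin N) (Fin N) ℂ) (z : ℂ) :
    Matrix (Fin N) (Fin N) ℂ :=
  Matrix.of fun i j =>
    (1 / 2 : ℂ) * (fderiv ℝ (fun w => f w i j) z 1
      + Complex.I * fderiv ℝ (fun w => f w i j) z Complex.I)

/-- Real-differentiability, entrywise, at every point of `D`. -/
def MatDiffOn {N : ℕ} (f : ℂ → Matrix (Fin N) (Fin N) ℂ) (D : Set ℂ) : Prop :=
  ∀ z ∈ D, ∀ i j, DifferentiableAt ℝ (fun w => f w i j) z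

/-- Entrywise complex conjugate of a matrix. -/
def mconj {N : ℕ} (M : Matrix (Fin N) (Fin N) ℂ) : Matrix (Fin N) (Fin N) ℂ :=
  M.map (starRingEnd ℂ)

/- ### Auxiliary lemmas -/

/-- Scalar Wirtinger derivative ∂_z. -/
noncomputable def wdzS (f : ℂ → ℂ) (z : ℂ) : ℂ :=
  (1 / 2 : ℂ) * (fderiv ℝ f z 1 - Complex.I * fderiv ℝ f z Complex.I)

lemma wDz_apply {N : ℕ} (f : ℂ → Matrix (Fin N) (Fin N) ℂ) (z : ℂ) (i j : Fin N) :
    wDz f z i j = wdzS (fun w => f w i j) z := rfl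

lemma wdzS_congr {f g : ℂ → ℂ} {z : ℂ} (h : f =ᶠ[nhds z] g) : wdzS f z = wdzS g z := by
  unfold wdzS; rw [h.fderiv_eq]

lemma wdzS_const (c : ℂ) (z : ℂ) : wdzS (fun _ => c) z = 0 := by
  simp [wdzS]

lemma wdzS_sub {f g : ℂ → ℂ} {z : ℂ} (hf : DifferentiableAt ℝ f z)
    (hg : DifferentiableAt ℝ g z) :
    wdzS (fun w => f w - g w) z = wdzS f z - wdzS g z := by
  simp only [wdzS, fderiv_fun_sub hf hg, ContinuousLinearMap.coe_sub', Pi.sub_apply]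
  ring

lemma wdzS_mul {f g : ℂ → ℂ} {z : ℂ} (hf : DifferentiableAt ℝ f z)
    (hg : DifferentiableAt ℝ g z) :
    wdzS (fun w => f w * g w) z = f z * wdzS g z + wdzS f z * g z := by
  simp only [wdzS, fderiv_fun_mul hf hg, ContinuousLinearMap.add_apply,
    ContinuousLinearMap.coe_smul', Pi.smul_apply, smul_eq_mul]
  ring

lemma wdzS_sum {ι : Type*} (s : Finset ι) (F : ι → ℂ → ℂ) {z : ℂ}
    (h : ∀ k ∈ s, DifferentiableAt ℝ (F k) z) :
    wdzS (fun w => ∑ k ∈ s, F k w) z = ∑ k ∈ s, wdzS (F k) z := by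
  unfold wdzS
  rw [fderiv_fun_sum h]
  simp only [ContinuousLinearMap.coe_sum', Finset.sum_apply, Finset.mul_sum,
    ← Finset.sum_sub_distrib]

lemma wDz_sub {N : ℕ} {f g : ℂ → Matrix (Fin N) (Fin N) ℂ} {z : ℂ}
    (hf : ∀ i j, DifferentiableAt ℝ (fun w => f w i j) z)
    (hg : ∀ i j, DifferentiableAt ℝ (fun w => g w i j) z) :
    wDz (fun w => f w - g w) z = wDz f z - wDz g z := by
  ext i j
  simp only [Matrix.sub_apply, wDz_apply]
  exact wdzS_sub (hf i j) (hg i j)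

lemma diffAt_mulM {N : ℕ} {f g : ℂ → Matrix (Fin N) (Fin N) ℂ} {z : ℂ}
    (hf : ∀ i j, DifferentiableAt ℝ (fun w => f w i j) z)
    (hg : ∀ i j, DifferentiableAt ℝ (fun w => g w i j) z) :
    ∀ i j, DifferentiableAt ℝ (fun w => (f w * g w) i j) z := by
  intro i j
  simp only [Matrix.mul_apply]
  exact DifferentiableAt.fun_sum fun k _ => (hf i k).mul (hg k j)

lemma wDz_mul {N : ℕ} {f g : ℂ → Matrix (Fin N) (Fin N) ℂ} {z : ℂ}
    (hf : ∀ i j, DifferentiableAt ℝ (fun w => f w i j) z)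
    (hg : ∀ i j, DifferentiableAt ℝ (fun w => g w i j) z) :
    wDz (fun w => f w * g w) z = wDz f z * g z + f z * wDz g z := by
  ext i j
  simp only [Matrix.add_apply, Matrix.mul_apply, wDz_apply]
  rw [wdzS_sum _ _ (fun k _ => (hf i k).fun_mul (hg k j)), ← Finset.sum_add_distrib]
  refine Finset.sum_congr rfl fun k _ => ?_
  rw [wdzS_mul (hf i k) (hg k j)]
  ring

lemma wDz_const_of_eventually {N : ℕ} {f : ℂ → Matrix (Fin N) (Fin N) ℂ}
    {c : Matrix (Fin N) (Fin N) ℂ} {z : ℂ} (h : ∀ᶠ w in nhds z, f w = c) :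
    wDz f z = 0 := by
  ext i j
  rw [wDz_apply,
    wdzS_congr (show (fun w => f w i j) =ᶠ[nhds z] fun _ => c i j from
      h.mono fun w hw => show f w i j = c i j by rw [hw]),
    wdzS_const]
  simp

lemma diffAt_det {N : ℕ} {f : ℂ → Matrix (Fin N) (Fin N) ℂ} {z : ℂ}
    (hf : ∀ i j, DifferentiableAt ℝ (fun w => f w i j) z) :
    DifferentiableAt ℝ (fun w => (f w).det) z := by
  simp only [Matrix.det_apply']
  refine DifferentiableAt.fun_sum fun σ _ => DifferentiableAt.const_mul ?_ _
  exact (HasFDerivAt.finset_prod fun i _ => (hf (σ i) i).hasFDerivAt).differentiableAt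

lemma diffAt_adj {N : ℕ} {f : ℂ → Matrix (Fin N) (Fin N) ℂ} {z : ℂ}
    (hf : ∀ i j, DifferentiableAt ℝ (fun w => f w i j) z) (i j : Fin N) :
    DifferentiableAt ℝ (fun w => (f w).adjugate i j) z := by
  simp only [Matrix.adjugate_apply]
  refine diffAt_det fun a b => ?_
  simp only [Matrix.updateRow_apply]
  by_cases h : a = j <;> simp [h, hf a b]

lemma diffAt_inv {N : ℕ} {f : ℂ → Matrix (Fin N) (Fin N) ℂ} {z : ℂ}
    (hf : ∀ i j, DifferentiableAt ℝ (fun w => f w i j) z)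
    (hdet : IsUnit (f z)) :
    ∀ i j, DifferentiableAt ℝ (fun w => (f w)⁻¹ i j) z := by
  have hd0 : (f z).det ≠ 0 := by
    have := (Matrix.isUnit_iff_isUnit_det _).mp hdet
    exact IsUnit.ne_zero this
  intro i j
  have h1 : (fun w => (f w)⁻¹ i j) = fun w => ((f w).det)⁻¹ * (f w).adjugate i j := by
    funext w
    rw [Matrix.inv_def, Matrix.smul_apply, Ring.inverse_eq_inv', smul_eq_mul]
  rw [h1]
  exact ((diffAt_det hf).inv hd0).mul (diffAt_adj hf i j)

lemma mconj_mul {N : ℕ} (A B : Matrix (Fin N) (Fin N) ℂ) :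
    mconj (A * B) = mconj A * mconj B := Matrix.map_mul

lemma mconj_sub {N : ℕ} (A B : Matrix (Fin N) (Fin N) ℂ) :
    mconj (A - B) = mconj A - mconj B := by
  ext i j; simp [mconj]

lemma mconj_one {N : ℕ} : mconj (1 : Matrix (Fin N) (Fin N) ℂ) = 1 :=
  Matrix.map_one _ (map_zero _) (map_one _)

/-- Theorem 1, second covariance relation:
Ψ̃⁺ = Ψ⁺ − ω_{F,Ψ⁺}·ω_{F,F⁺}⁻¹·F⁺ satisfies ∂_z Ψ̃⁺ − conj(Ψ̃⁺)·B̃ = 0 with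
B̃ = B + F·ω_{F,F⁺}⁻¹·F⁺. -/
theorem moutard_covariance_second {N : ℕ} (D : Set ℂ) (hD : IsOpen D)
    (B Ψp F Fp ωFF ωFΨ : ℂ → Matrix (Fin N) (Fin N) ℂ)
    (hB : MatDiffOn B D) (hΨp : MatDiffOn Ψp D) (hF : MatDiffOn F D)
    (hFp : MatDiffOn Fp D) (hωFF : MatDiffOn ωFF D) (hωFΨ : MatDiffOn ωFΨ D)
    (hFsys : ∀ z ∈ D, wDzbar F z + B z * mconj (F z) = 0)
    (hFpsys : ∀ z ∈ D, wDz Fp z - mconj (Fp z) * B z = 0)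
    (hΨpsys : ∀ z ∈ D, wDz Ψp z - mconj (Ψp z) * B z = 0)
    (hωFFzbar : ∀ z ∈ D, wDzbar ωFF z = Fp z * mconj (F z))
    (hωFFz : ∀ z ∈ D, wDz ωFF z = - (mconj (Fp z) * F z))
    (hωFFim : ∀ z ∈ D, mconj (ωFF z) = - ωFF z)
    (hωFΨzbar : ∀ z ∈ D, wDzbar ωFΨ z = Ψp z * mconj (F z))
    (hωFΨz : ∀ z ∈ D, wDz ωFΨ z = - (mconj (Ψp z) * F z))
    (hωFΨim : ∀ z ∈ D, mconj (ωFΨ z) = - ωFΨ z)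
    (hinv : ∀ z ∈ D, IsUnit (ωFF z)) :
    ∀ z ∈ D,
      wDz (fun w => Ψp w - ωFΨ w * (ωFF w)⁻¹ * Fp w) z
        - mconj (Ψp z - ωFΨ z * (ωFF z)⁻¹ * Fp z)
          * (B z + F z * (ωFF z)⁻¹ * Fp z) = 0 := by
  intro z hz
  classical
  have hdetz : IsUnit (ωFF z).det := (Matrix.isUnit_iff_isUnit_det _).mp (hinv z hz)
  have hGd : ∀ i j, DifferentiableAt ℝ (fun w => (ωFF w)⁻¹ i j) z :=
    diffAt_inv (hωFF z hz) (hinv z hz)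
  have hGz1 : (ωFF z)⁻¹ * ωFF z = 1 := Matrix.nonsing_inv_mul _ hdetz
  have hzG1 : ωFF z * (ωFF z)⁻¹ = 1 := Matrix.mul_nonsing_inv _ hdetz
  -- derivative of the inverse
  have hΩG1 : ∀ᶠ w in nhds z, ωFF w * (ωFF w)⁻¹ = 1 :=
    Filter.eventually_of_mem (hD.mem_nhds hz) fun w hw =>
      Matrix.mul_nonsing_inv _ ((Matrix.isUnit_iff_isUnit_det _).mp (hinv w hw))
  have h0 : wDz (fun w => ωFF w * (ωFF w)⁻¹) z = 0 := wDz_const_of_eventually hΩG1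
  have hmulrule := wDz_mul (hωFF z hz) hGd
  have h2 : wDz ωFF z * (ωFF z)⁻¹ + ωFF z * wDz (fun w => (ωFF w)⁻¹) z = 0 := by
    rw [← hmulrule, h0]
  have h4 : ωFF z * wDz (fun w => (ωFF w)⁻¹) z
      = mconj (Fp z) * F z * (ωFF z)⁻¹ := by
    have h3 := eq_neg_of_add_eq_zero_right h2
    rw [h3, hωFFz z hz]
    noncomm_ring
  have hwG : wDz (fun w => (ωFF w)⁻¹) z
      = (ωFF z)⁻¹ * (mconj (Fp z) * F z * (ωFF z)⁻¹) := by
    calc wDz (fun w => (ωFF w)⁻¹) z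
        = ((ωFF z)⁻¹ * ωFF z) * wDz (fun w => (ωFF w)⁻¹) z := by rw [hGz1, one_mul]
      _ = (ωFF z)⁻¹ * (ωFF z * wDz (fun w => (ωFF w)⁻¹) z) := Matrix.mul_assoc _ _ _
      _ = _ := by rw [h4]
  -- conjugate of the inverse
  have hmG : mconj ((ωFF z)⁻¹) = -(ωFF z)⁻¹ := by
    have h5 : mconj (ωFF z) * mconj ((ωFF z)⁻¹) = 1 := by
      rw [← mconj_mul, hzG1, mconj_one]
    rw [hωFFim z hz] at h5
    have h6 : ωFF z * mconj ((ωFF z)⁻¹) = -1 := by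
      have h7 : -(ωFF z * mconj ((ωFF z)⁻¹)) = 1 := by rw [← neg_mul]; exact h5
      rw [← neg_neg (ωFF z * mconj ((ωFF z)⁻¹)), h7]
    calc mconj ((ωFF z)⁻¹)
        = ((ωFF z)⁻¹ * ωFF z) * mconj ((ωFF z)⁻¹) := by rw [hGz1, one_mul]
      _ = (ωFF z)⁻¹ * (ωFF z * mconj ((ωFF z)⁻¹)) := Matrix.mul_assoc _ _ _
      _ = (ωFF z)⁻¹ * (-1) := by rw [h6]
      _ = -(ωFF z)⁻¹ := by simp
  -- system equations at z
  have e1 : wDz Ψp z = mconj (Ψp z) * B z := sub_eq_zero.mp (hΨpsys z hz)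
  have e2 : wDz Fp z = mconj (Fp z) * B z := sub_eq_zero.mp (hFpsys z hz)
  -- expand the derivative of the combination
  have hsub := wDz_sub (f := Ψp) (g := fun w => ωFΨ w * (ωFF w)⁻¹ * Fp w)
    (hΨp z hz) (diffAt_mulM (diffAt_mulM (hωFΨ z hz) hGd) (hFp z hz))
  have hmul1 := wDz_mul (f := fun w => ωFΨ w * (ωFF w)⁻¹) (g := Fp)
    (diffAt_mulM (hωFΨ z hz) hGd) (hFp z hz)
  have hmul2 := wDz_mul (f := ωFΨ) (g := fun w => (ωFF w)⁻¹) (hωFΨ z hz) hGd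
  rw [hsub, hmul1, hmul2, hwG, e1, e2, hωFΨz z hz, mconj_sub, mconj_mul, mconj_mul,
    hmG, hωFΨim z hz]
  noncomm_ring
end

section
/- (Remark: the Moutard transformation of Proposition 1 is a gauge transformation.) Let D ⊆ ℂ be open, let A, Ψ, F, F⁺, ω̂_{F,F⁺}, Λ : D → Matrix (Fin N) (Fin N) ℂ be real-differentiable, and assume on D: (i) ∂_z̄ Ψ + A·Ψ = 0 and ∂_z̄ F + A·F = 0; (ii) ∂_z̄ ω̂_{F,F⁺} = F⁺·F; (iii) ω̂_{F,F⁺}(z) is invertible for every z ∈ D; (iv) ∂_z̄ Λ = Λ·A + F⁺. Define g = 1 − F · ω̂_{F,F⁺}⁻¹ · Λ (where 1 is the identity matrix) and Ã = A + F · ω̂_{F,F⁺}⁻¹ · F⁺. Then ∂_z̄ (g·Ψ) + Ã·(g·Ψ) = 0 on D. -/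
open Complex Matrix

noncomputable def wb (f : ℂ → ℂ) (z : ℂ) : ℂ :=
  (1 / 2 : ℂ) * (fderiv ℝ f z 1 + Complex.I * fderiv ℝ f z Complex.I)

lemma wb_congr {f g : ℂ → ℂ} {z : ℂ} (h : f =ᶠ[nhds z] g) : wb f z = wb g z := by
  unfold wb; rw [h.fderiv_eq]

lemma wb_const (c : ℂ) (z : ℂ) : wb (fun _ => c) z = 0 := by simp [wb]

lemma wb_sum {ι : Type*} (s : Finset ι) (f : ι → ℂ → ℂ) (z : ℂ)
    (h : ∀ i ∈ s, DifferentiableAt ℝ (f i) z) :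
    wb (fun w => ∑ i ∈ s, f i w) z = ∑ i ∈ s, wb (f i) z := by
  unfold wb
  rw [fderiv_fun_sum h]
  simp only [ContinuousLinearMap.coe_sum', Finset.sum_apply, Finset.mul_sum,
    Finset.sum_add_distrib]
  rw [← Finset.sum_add_distrib, Finset.mul_sum]

lemma wb_mul {f g : ℂ → ℂ} {z : ℂ} (hf : DifferentiableAt ℝ f z)
    (hg : DifferentiableAt ℝ g z) :
    wb (fun w => f w * g w) z = wb f z * g z + f z * wb g z := by
  unfold wb
  rw [fderiv_fun_mul hf hg]
  simp only [ContinuousLinearMap.add_apply, ContinuousLinearMap.smul_apply, smul_eq_mul]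
  ring

lemma wb_sub {f g : ℂ → ℂ} {z : ℂ} (hf : DifferentiableAt ℝ f z)
    (hg : DifferentiableAt ℝ g z) :
    wb (fun w => f w - g w) z = wb f z - wb g z := by
  unfold wb
  rw [fderiv_fun_sub hf hg]
  simp only [ContinuousLinearMap.sub_apply]
  ring

def MatDiffAt {N : ℕ} (f : ℂ → Matrix (Fin N) (Fin N) ℂ) (z : ℂ) : Prop :=
  ∀ i j, DifferentiableAt ℝ (fun w => f w i j) z


lemma wDzbar_apply {N : ℕ} (f : ℂ → Matrix (Fin N) (Fin N) ℂ) (z : ℂ) (i j : Fin N) :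
    wDzbar f z i j = wb (fun w => f w i j) z := rfl

lemma MatDiffAt.mul {N : ℕ} {f g : ℂ → Matrix (Fin N) (Fin N) ℂ} {z : ℂ}
    (hf : MatDiffAt f z) (hg : MatDiffAt g z) : MatDiffAt (fun w => f w * g w) z := by
  intro i j
  have : (fun w => (f w * g w) i j) = fun w => ∑ k, f w i k * g w k j := by
    funext w; exact Matrix.mul_apply
  rw [this]
  exact DifferentiableAt.fun_sum fun k _ => (hf i k).fun_mul (hg k j)

lemma MatDiffAt.sub {N : ℕ} {f g : ℂ → Matrix (Fin N) (Fin N) ℂ} {z : ℂ}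
    (hf : MatDiffAt f z) (hg : MatDiffAt g z) : MatDiffAt (fun w => f w - g w) z :=
  fun i j => by
    have : (fun w => (f w - g w) i j) = fun w => f w i j - g w i j := rfl
    rw [this]; exact (hf i j).sub (hg i j)

lemma MatDiffAt.const {N : ℕ} (c : Matrix (Fin N) (Fin N) ℂ) (z : ℂ) :
    MatDiffAt (fun _ => c) z := fun _ _ => differentiableAt_const _

lemma wDzbar_mul {N : ℕ} {f g : ℂ → Matrix (Fin N) (Fin N) ℂ} {z : ℂ}
    (hf : MatDiffAt f z) (hg : MatDiffAt g z) :
    wDzbar (fun w => f w * g w) z = wDzbar f z * g z + f z * wDzbar g z := by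
  ext i j
  have h1 : (fun w => (f w * g w) i j) = fun w => ∑ k, f w i k * g w k j := by
    funext w; exact Matrix.mul_apply
  rw [Matrix.add_apply, Matrix.mul_apply, Matrix.mul_apply, wDzbar_apply, h1,
    wb_sum _ _ _ (fun k _ => (hf i k).fun_mul (hg k j))]
  simp only [wDzbar_apply]
  rw [← Finset.sum_add_distrib]
  exact Finset.sum_congr rfl fun k _ => wb_mul (hf i k) (hg k j)

lemma wDzbar_sub {N : ℕ} {f g : ℂ → Matrix (Fin N) (Fin N) ℂ} {z : ℂ}
    (hf : MatDiffAt f z) (hg : MatDiffAt g z) :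
    wDzbar (fun w => f w - g w) z = wDzbar f z - wDzbar g z := by
  ext i j
  rw [Matrix.sub_apply, wDzbar_apply, wDzbar_apply, wDzbar_apply]
  exact wb_sub (hf i j) (hg i j)

lemma wDzbar_const {N : ℕ} (c : Matrix (Fin N) (Fin N) ℂ) (z : ℂ) :
    wDzbar (fun _ => c) z = 0 := by
  ext i j
  rw [wDzbar_apply]
  exact wb_const _ _

lemma wDzbar_congr {N : ℕ} {f g : ℂ → Matrix (Fin N) (Fin N) ℂ} {z : ℂ}
    (h : ∀ᶠ w in nhds z, f w = g w) : wDzbar f z = wDzbar g z := by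
  ext i j
  rw [wDzbar_apply, wDzbar_apply]
  exact wb_congr (h.mono fun w hw => by simp only []; rw [hw])

lemma matDiffAt_det {N : ℕ} {f : ℂ → Matrix (Fin N) (Fin N) ℂ} {z : ℂ}
    (hf : MatDiffAt f z) : DifferentiableAt ℝ (fun w => (f w).det) z := by
  have h : (fun w => (f w).det)
      = fun w => ∑ σ : Equiv.Perm (Fin N),
          ((Equiv.Perm.sign σ : ℤ) : ℂ) * ∏ i, f w (σ i) i := by
    funext w
    rw [Matrix.det_apply]
    exact Finset.sum_congr rfl fun σ _ => by
      rw [Units.smul_def, zsmul_eq_mul]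
  rw [h]
  exact DifferentiableAt.fun_sum fun σ _ =>
    ((HasFDerivAt.finset_prod (fun i _ => (hf (σ i) i).hasFDerivAt)).differentiableAt.const_mul _)

lemma matDiffAt_inv {N : ℕ} {f : ℂ → Matrix (Fin N) (Fin N) ℂ} {z : ℂ}
    (hf : MatDiffAt f z) (h : IsUnit (f z)) : MatDiffAt (fun w => (f w)⁻¹) z := by
  have hdet : (f z).det ≠ 0 := by
    have := (Matrix.isUnit_iff_isUnit_det (f z)).mp h
    exact isUnit_iff_ne_zero.mp this
  intro i j
  have hentry : (fun w => (f w)⁻¹ i j)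
      = fun w => ((f w).det)⁻¹ * (f w).adjugate i j := by
    funext w
    rw [Matrix.inv_def, Matrix.smul_apply, Ring.inverse_eq_inv', smul_eq_mul]
  rw [hentry]
  have hadj : DifferentiableAt ℝ (fun w => (f w).adjugate i j) z := by
    have h2 : (fun w => (f w).adjugate i j)
        = fun w => ((f w).updateRow j (Pi.single i 1)).det := by
      funext w; rw [Matrix.adjugate_apply]
    rw [h2]
    apply matDiffAt_det
    intro k l
    set v : Fin N → ℂ := Pi.single i 1 with hv
    have h3 : (fun w => (f w).updateRow j v k l)
        = fun w => if k = j then v l else f w k l := by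
      funext w; rw [Matrix.updateRow_apply]
    rw [h3]
    by_cases hk : k = j
    · simp only [hk, if_true]; exact differentiableAt_const _
    · simp only [hk, if_false]; exact hf k l
  exact ((matDiffAt_det hf).inv hdet).mul hadj

/-- Remark: with g = 1 − F·ω̂_{F,F⁺}⁻¹·Λ, ∂_z̄ Λ = Λ·A + F⁺, and
Ã = A + F·ω̂_{F,F⁺}⁻¹·F⁺, one has ∂_z̄ (g·Ψ) + Ã·(g·Ψ) = 0. -/
theorem moutard_is_gauge {N : ℕ} (D : Set ℂ) (hD : IsOpen D)
    (A Ψ F Fp ωFF Λ : ℂ → Matrix (Fin N) (Fin N) ℂ)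
    (hA : MatDiffOn A D) (hΨ : MatDiffOn Ψ D) (hF : MatDiffOn F D)
    (hFp : MatDiffOn Fp D) (hωFF : MatDiffOn ωFF D) (hΛ : MatDiffOn Λ D)
    (hΨsys : ∀ z ∈ D, wDzbar Ψ z + A z * Ψ z = 0)
    (hFsys : ∀ z ∈ D, wDzbar F z + A z * F z = 0)
    (hωFFzbar : ∀ z ∈ D, wDzbar ωFF z = Fp z * F z)
    (hinv : ∀ z ∈ D, IsUnit (ωFF z))
    (hΛsys : ∀ z ∈ D, wDzbar Λ z = Λ z * A z + Fp z) :
    ∀ z ∈ D,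
      wDzbar (fun w => (1 - F w * (ωFF w)⁻¹ * Λ w) * Ψ w) z
        + (A z + F z * (ωFF z)⁻¹ * Fp z)
          * ((1 - F z * (ωFF z)⁻¹ * Λ z) * Ψ z) = 0 := by
  intro z hz
  have hAz : MatDiffAt A z := fun i j => hA z hz i j
  have hPz : MatDiffAt Ψ z := fun i j => hΨ z hz i j
  have hFz : MatDiffAt F z := fun i j => hF z hz i j
  have hFpz : MatDiffAt Fp z := fun i j => hFp z hz i j
  have hoz : MatDiffAt ωFF z := fun i j => hωFF z hz i j
  have hLz : MatDiffAt Λ z := fun i j => hΛ z hz i j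
  have hWz : MatDiffAt (fun w => (ωFF w)⁻¹) z := matDiffAt_inv hoz (hinv z hz)
  have hdetz : (ωFF z).det ≠ 0 :=
    isUnit_iff_ne_zero.mp ((Matrix.isUnit_iff_isUnit_det _).mp (hinv z hz))
  have hdetev : ∀ᶠ w in nhds z, (ωFF w).det ≠ 0 :=
    (matDiffAt_det hoz).continuousAt.eventually_ne hdetz
  have hmulev : ∀ᶠ w in nhds z, ωFF w * (ωFF w)⁻¹ = 1 :=
    hdetev.mono fun w hw => Matrix.mul_nonsing_inv _ (isUnit_iff_ne_zero.mpr hw)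
  have hWinv : (ωFF z)⁻¹ * ωFF z = 1 :=
    Matrix.nonsing_inv_mul _ (isUnit_iff_ne_zero.mpr hdetz)
  have hDW : wDzbar (fun w => (ωFF w)⁻¹) z
      = -((ωFF z)⁻¹ * (Fp z * F z) * (ωFF z)⁻¹) := by
    have h0 : wDzbar (fun w => ωFF w * (ωFF w)⁻¹) z = 0 := by
      rw [wDzbar_congr hmulev, wDzbar_const]
    rw [wDzbar_mul hoz hWz, hωFFzbar z hz] at h0
    have h1 : ωFF z * wDzbar (fun w => (ωFF w)⁻¹) z = -(Fp z * F z * (ωFF z)⁻¹) :=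
      eq_neg_of_add_eq_zero_right h0
    calc wDzbar (fun w => (ωFF w)⁻¹) z
        = ((ωFF z)⁻¹ * ωFF z) * wDzbar (fun w => (ωFF w)⁻¹) z := by
          rw [hWinv, Matrix.one_mul]
      _ = (ωFF z)⁻¹ * (ωFF z * wDzbar (fun w => (ωFF w)⁻¹) z) := by
          rw [Matrix.mul_assoc]
      _ = -((ωFF z)⁻¹ * (Fp z * F z) * (ωFF z)⁻¹) := by rw [h1]; noncomm_ring
  have hDΨ : wDzbar Ψ z = -(A z * Ψ z) := eq_neg_of_add_eq_zero_left (hΨsys z hz)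
  have hDF : wDzbar F z = -(A z * F z) := eq_neg_of_add_eq_zero_left (hFsys z hz)
  have hFW : MatDiffAt (fun w => F w * (ωFF w)⁻¹) z := hFz.mul hWz
  have hFWL : MatDiffAt (fun w => F w * (ωFF w)⁻¹ * Λ w) z := hFW.mul hLz
  have hg : MatDiffAt (fun w => 1 - F w * (ωFF w)⁻¹ * Λ w) z :=
    (MatDiffAt.const 1 z).sub hFWL
  rw [wDzbar_mul hg hPz, wDzbar_sub (MatDiffAt.const 1 z) hFWL, wDzbar_const,
    wDzbar_mul hFW hLz, wDzbar_mul hFz hWz, hDW, hDF, hDΨ, hΛsys z hz]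
  noncomm_ring
end
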